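/- Fix constants 0 < α ≤ 1, c > 0, an integer Δ ≥ 1, and a function f on the positive integers with f(k) ≥ c for all k, and let K = min{u : for every k ≥ u, k·f(k) > 1/α}. Set β = (1/Δ)·min{1/K, αc/4}. For every ε > 0 there exists n₀ such that for every n ≥ n₀ and every graph G on n vertices with maximum degree at most Δ that is an f-expander, with probability at least 1 − ε under the deletion process with parameter α, the induced subgraph of G on the largest connected component V̂₁ of Ĝ is a β-expander. -/

import Mathlib

open MeasureTheory

noncomputable def bern (p : ENNReal) : Measure Bool :=
  (PMF.bernoulli (min p 1).toNNReal
    (by simpa using ENNReal.toNNReal_mono ENNReal.one_ne_top (min_le_right p 1))).toMeasure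

noncomputable def delMeasure (n : ℕ) (α : ℝ) : Measure (Fin n → Bool) :=
  Measure.pi fun _ => bern (ENNReal.ofReal ((n : ℝ) ^ (-α)))

def survivors {n : ℕ} (ω : Fin n → Bool) : Set (Fin n) := {v | ω v = false}

def nbhd {V : Type*} (H : SimpleGraph V) (U : Set V) : Set V :=
  {v | v ∉ U ∧ ∃ u ∈ U, H.Adj u v}

def IsBetaExpander {V : Type*} (H : SimpleGraph V) (β : ℝ) : Prop :=
  ∀ U : Set V, U.Nonempty → (U.ncard : ℝ) ≤ (Nat.card V : ℝ) / 2 →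
    β * U.ncard ≤ ((nbhd H U).ncard : ℝ)

def IsFExpander {V : Type*} (H : SimpleGraph V) (f : ℕ → ℝ) : Prop :=
  ∀ U : Set V, U.Nonempty → (U.ncard : ℝ) ≤ (Nat.card V : ℝ) / 2 →
    f U.ncard * U.ncard ≤ ((nbhd H U).ncard : ℝ)

noncomputable def Kconst (α : ℝ) (f : ℕ → ℝ) : ℕ :=
  sInf {u : ℕ | 1 ≤ u ∧ ∀ k : ℕ, u ≤ k → 1 / α < (k : ℝ) * f k}

open Finset

section Walks
variable {n : ℕ} {G : SimpleGraph (Fin n)}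

/-- A finset is `SConn` if any two of its members are joined by a walk staying inside it. -/
def SConn (G : SimpleGraph (Fin n)) (S : Finset (Fin n)) : Prop :=
  ∀ a ∈ S, ∀ b ∈ S, ∃ w : G.Walk a b, ∀ x ∈ w.support, x ∈ S

lemma sconn_noncut {S : Finset (Fin n)} (hS : SConn G S) (h2 : 2 ≤ S.card) :
    ∃ x ∈ S, SConn G (S.erase x) ∧ ∃ y ∈ S.erase x, G.Adj x y := by
  classical
  obtain ⟨u, hu⟩ : S.Nonempty := Finset.card_pos.mp (by omega)
  let d : Fin n → ℕ := fun y =>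
    sInf {ℓ | ∃ w : G.Walk u y, (∀ x ∈ w.support, x ∈ S) ∧ w.length = ℓ}
  have hmem : ∀ y ∈ S, ∃ w : G.Walk u y, (∀ x ∈ w.support, x ∈ S) ∧ w.length = d y := by
    intro y hy
    obtain ⟨w, hw⟩ := hS u hu y hy
    have hne : {ℓ | ∃ w : G.Walk u y, (∀ x ∈ w.support, x ∈ S) ∧ w.length = ℓ}.Nonempty :=
      ⟨w.length, w, hw, rfl⟩
    exact Nat.sInf_mem hne
  have hle : ∀ (y : Fin n) (w : G.Walk u y), (∀ x ∈ w.support, x ∈ S) → d y ≤ w.length := by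
    intro y w hw
    exact Nat.sInf_le ⟨w, hw, rfl⟩
  have hdu : d u = 0 := Nat.le_zero.mp
    (by simpa using hle u SimpleGraph.Walk.nil (by simpa using hu))
  obtain ⟨x, hxS, hmax⟩ := Finset.exists_max_image S d ⟨u, hu⟩
  obtain ⟨y₀, hy₀S, hy₀u⟩ := Finset.exists_mem_ne h2 u
  have hdy₀ : 1 ≤ d y₀ := by
    by_contra h
    obtain ⟨w, _, hwl⟩ := hmem y₀ hy₀S
    exact hy₀u (SimpleGraph.Walk.eq_of_length_eq_zero (p := w) (by omega)).symm
  have hdx : 1 ≤ d x := le_trans hdy₀ (hmax y₀ hy₀S)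
  have hxu : x ≠ u := fun h => by rw [h, hdu] at hdx; omega
  -- minimal walks to other vertices avoid x
  have avoid : ∀ y ∈ S, y ≠ x → ∃ w : G.Walk u y, ∀ v ∈ w.support, v ∈ S.erase x := by
    intro y hy hyx
    obtain ⟨w, hwS, hwl⟩ := hmem y hy
    refine ⟨w, fun v hv => Finset.mem_erase.mpr ⟨?_, hwS v hv⟩⟩
    intro hvx
    subst hvx
    have h1 : d v ≤ (w.takeUntil v hv).length :=
      hle v _ (fun z hz => hwS z (SimpleGraph.Walk.support_takeUntil_subset w hv hz))
    have h2' : (w.takeUntil v hv).length + (w.dropUntil v hv).length = w.length := by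
      have := congrArg SimpleGraph.Walk.length (w.take_spec hv)
      rwa [SimpleGraph.Walk.length_append] at this
    have h3 : 1 ≤ (w.dropUntil v hv).length := by
      by_contra h
      exact hyx (SimpleGraph.Walk.eq_of_length_eq_zero (p := w.dropUntil v hv) (by omega)).symm
    have h4 : d y ≤ d v := hmax y hy
    omega
  refine ⟨x, hxS, ?_, ?_⟩
  · intro a ha b hb
    have haS : a ∈ S := Finset.mem_erase.mp ha |>.2
    have hbS : b ∈ S := Finset.mem_erase.mp hb |>.2
    obtain ⟨wa, hwa⟩ := avoid a haS (Finset.mem_erase.mp ha).1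
    obtain ⟨wb, hwb⟩ := avoid b hbS (Finset.mem_erase.mp hb).1
    refine ⟨wa.reverse.append wb, fun z hz => ?_⟩
    rcases (SimpleGraph.Walk.mem_support_append_iff _ _).mp hz with h | h
    · exact hwa z (by simpa [SimpleGraph.Walk.support_reverse] using h)
    · exact hwb z h
  · -- x has a neighbour in S.erase x
    obtain ⟨w, hwS, hwl⟩ := hmem x hxS
    have hnn : ¬ w.reverse.Nil := by
      rw [SimpleGraph.Walk.nil_iff_length_eq]
      rw [SimpleGraph.Walk.length_reverse]
      omega
    cases hw : w.reverse with
    | nil => rw [hw] at hnn; exact absurd SimpleGraph.Walk.Nil.nil hnn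
    | @cons _ y' _ hadj p =>
      have hy'w : y' ∈ w.support := by
        have : y' ∈ w.reverse.support := by rw [hw]; simp
        simpa [SimpleGraph.Walk.support_reverse] using this
      exact ⟨y', Finset.mem_erase.mpr ⟨hadj.ne', hwS y' hy'w⟩, hadj⟩
lemma sconn_cover_aux {n : ℕ} {G : SimpleGraph (Fin n)} :
    ∀ (k : ℕ) (S : Finset (Fin n)), S.card = k → SConn G S → S.Nonempty →
    ∃ (v : Fin n) (_ : v ∈ S) (w : G.Walk v v),
      (∀ x, x ∈ w.support ↔ x ∈ S) ∧ w.length + 2 ≤ 2 * S.card := by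
  classical
  intro k
  induction k using Nat.strong_induction_on with
  | _ k IH =>
    intro S hcard hS hne
    rcases Nat.lt_or_ge S.card 2 with hlt | hge
    · -- S is a singleton
      obtain ⟨v, hv⟩ : ∃ v, S = {v} := Finset.card_eq_one.mp (by
        obtain ⟨a, ha⟩ := hne
        have : 1 ≤ S.card := Finset.card_pos.mpr ⟨a, ha⟩
        omega)
      subst hv
      refine ⟨v, by simp, SimpleGraph.Walk.nil, by simp, by simp⟩
    · obtain ⟨x, hxS, hSe, y, hyE, hadj⟩ := sconn_noncut hS hge
      have hcard' : (S.erase x).card = S.card - 1 := Finset.card_erase_of_mem hxS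
      have hlt' : S.card - 1 < k := by omega
      obtain ⟨v, hvE, w, hwsupp, hwlen⟩ := IH (S.card - 1) (by omega) (S.erase x)
        (by omega) hSe ⟨y, hyE⟩
      have hyW : y ∈ w.support := (hwsupp y).mpr hyE
      set p := w.takeUntil y hyW with hp
      set q := w.dropUntil y hyW with hq
      have hpq : p.append q = w := w.take_spec hyW
      have e : G.Adj y x := hadj.symm
      set mid : G.Walk y y := SimpleGraph.Walk.cons e (SimpleGraph.Walk.cons e.symm SimpleGraph.Walk.nil) with hmid
      refine ⟨v, Finset.mem_of_mem_erase hvE, p.append (mid.append q), ?_, ?_⟩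
      · intro z
        have hzw : z ∈ w.support ↔ (z ∈ p.support ∨ z ∈ q.support) := by
          rw [← hpq]; exact SimpleGraph.Walk.mem_support_append_iff _ _
        have hmid_supp : mid.support = [y, x, y] := by
          simp [hmid, SimpleGraph.Walk.support_cons]
        constructor
        · intro hz
          rcases (SimpleGraph.Walk.mem_support_append_iff _ _).mp hz with h | h
          · exact Finset.mem_of_mem_erase ((hwsupp z).mp (hzw.mpr (Or.inl h)))
          · rcases (SimpleGraph.Walk.mem_support_append_iff _ _).mp h with h' | h'
            · rw [hmid_supp] at h'
              simp at h'
              rcases h' with rfl | rfl | rfl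
              · exact Finset.mem_of_mem_erase hyE
              · exact hxS
              · exact Finset.mem_of_mem_erase hyE
            · exact Finset.mem_of_mem_erase ((hwsupp z).mp (hzw.mpr (Or.inr h')))
        · intro hz
          by_cases hzx : z = x
          · subst hzx
            refine (SimpleGraph.Walk.mem_support_append_iff _ _).mpr (Or.inr ?_)
            refine (SimpleGraph.Walk.mem_support_append_iff _ _).mpr (Or.inl ?_)
            rw [hmid_supp]; simp
          · have : z ∈ w.support := (hwsupp z).mpr (Finset.mem_erase.mpr ⟨hzx, hz⟩)
            rcases hzw.mp this with h | h
            · exact (SimpleGraph.Walk.mem_support_append_iff _ _).mpr (Or.inl h)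
            · exact (SimpleGraph.Walk.mem_support_append_iff _ _).mpr
                (Or.inr ((SimpleGraph.Walk.mem_support_append_iff _ _).mpr (Or.inr h)))
      · have hlen : (p.append (mid.append q)).length = w.length + 2 := by
          have h1 : p.length + q.length = w.length := by
            have := congrArg SimpleGraph.Walk.length hpq
            rwa [SimpleGraph.Walk.length_append] at this
          simp [SimpleGraph.Walk.length_append, hmid]
          omega
        rw [hlen]
        rw [hcard'] at hwlen
        omega

lemma sconn_cover {n : ℕ} {G : SimpleGraph (Fin n)} {S : Finset (Fin n)}
    (hS : SConn G S) (hne : S.Nonempty) :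
    ∃ (v : Fin n) (_ : v ∈ S) (w : G.Walk v v),
      (∀ x, x ∈ w.support ↔ x ∈ S) ∧ w.length + 2 ≤ 2 * S.card :=
  sconn_cover_aux S.card S rfl hS hne

end Walks

section Chains
variable {n : ℕ}

open Classical in
/-- Finset of all `G.Adj`-chains (as lists) with `m+1` vertices. -/
noncomputable def chainsF (G : SimpleGraph (Fin n)) : ℕ → Finset (List (Fin n))
  | 0 => Finset.univ.image (fun v : Fin n => [v])
  | (m+1) => (chainsF G m).biUnion (fun l =>
      (Finset.univ.filter (fun v : Fin n => ∃ h : l ≠ [], G.Adj v (l.head h))).image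
        (fun v => v :: l))

lemma mem_chainsF {G : SimpleGraph (Fin n)} :
    ∀ (l : List (Fin n)), l.Chain' G.Adj → ∀ m, l.length = m + 1 → l ∈ chainsF G m := by
  classical
  intro l
  induction l with
  | nil => intro _ m hm; simp at hm
  | cons a t ih =>
    intro hch m hm
    cases t with
    | nil =>
      have : m = 0 := by simpa using hm
      subst this
      simp [chainsF]
    | cons b t' =>
      obtain ⟨m', rfl⟩ : ∃ m', m = m' + 1 := by
        simp only [List.length_cons] at hm
        exact ⟨t'.length, by omega⟩
      have hch' : (b :: t').Chain' G.Adj := hch.tail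
      have hadj : G.Adj a b := List.isChain_cons_cons.mp hch |>.1
      have ht : (b :: t') ∈ chainsF G m' := ih hch' m' (by simp at hm ⊢; omega)
      simp only [chainsF, Finset.mem_biUnion]
      refine ⟨b :: t', ht, ?_⟩
      rw [Finset.mem_image]
      refine ⟨a, ?_, rfl⟩
      rw [Finset.mem_filter]
      exact ⟨Finset.mem_univ a, ⟨by simp, by simpa using hadj⟩⟩

lemma card_chainsF {G : SimpleGraph (Fin n)} {Δ : ℕ}
    (hdeg : ∀ v : Fin n, (G.neighborSet v).ncard ≤ Δ) :
    ∀ m, (chainsF G m).card ≤ n * Δ ^ m := by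
  classical
  have hfilter : ∀ a : Fin n,
      (Finset.univ.filter (fun v : Fin n => G.Adj v a)).card ≤ Δ := by
    intro a
    have : ((Finset.univ.filter (fun v : Fin n => G.Adj v a) : Finset (Fin n)) : Set (Fin n))
        = G.neighborSet a := by
      ext v; simp [SimpleGraph.mem_neighborSet, SimpleGraph.adj_comm]
    have h2 := hdeg a
    rw [← this, Set.ncard_coe_finset] at h2
    exact h2
  intro m
  induction m with
  | zero =>
    simpa [chainsF] using Finset.card_image_le.trans (by simp)
  | succ m ih =>
    have : (chainsF G (m+1)).card ≤ (chainsF G m).card * Δ := by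
      refine (Finset.card_biUnion_le).trans ?_
      have : ∀ l ∈ chainsF G m,
          ((Finset.univ.filter (fun v : Fin n => ∃ h : l ≠ [], G.Adj v (l.head h))).image
            (fun v => v :: l)).card ≤ Δ := by
        intro l _
        refine Finset.card_image_le.trans ?_
        by_cases hl : l = []
        · subst hl; simp
        · refine le_trans (Finset.card_le_card ?_) (hfilter (l.head hl))
          intro v hv
          rw [Finset.mem_filter] at hv ⊢
          exact ⟨hv.1, hv.2.choose_spec⟩
      calc ∑ l ∈ chainsF G m, ((Finset.univ.filter
              (fun v : Fin n => ∃ h : l ≠ [], G.Adj v (l.head h))).image (fun v => v :: l)).card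
          ≤ ∑ l ∈ chainsF G m, Δ := Finset.sum_le_sum this
        _ = (chainsF G m).card * Δ := by simp [Finset.sum_const, Nat.smul_one_eq_cast, mul_comm]
      
    calc (chainsF G (m+1)).card ≤ (chainsF G m).card * Δ := this
      _ ≤ n * Δ ^ m * Δ := Nat.mul_le_mul_right Δ ih
      _ = n * Δ ^ (m+1) := by ring

end Chains
section Bridge
variable {n : ℕ} {G : SimpleGraph (Fin n)}

/-- the coercion homomorphism from an induced subgraph -/
def inducehom (G : SimpleGraph (Fin n)) (s : Set (Fin n)) : G.induce s →g G :=
  ⟨Subtype.val, fun {a b} h => h⟩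

lemma supp_walk_mem {s : Set (Fin n)} {a b : ↥s} (w : (G.induce s).Walk a b)
    {v : ↥s} (hv : v ∈ w.support) :
    (G.induce s).connectedComponentMk v = (G.induce s).connectedComponentMk b := by
  classical
  exact SimpleGraph.ConnectedComponent.sound (w.dropUntil v hv).reachable

lemma supp_sconn {s : Set (Fin n)} (c : (G.induce s).ConnectedComponent) :
    SConn G ((Set.toFinite (Subtype.val '' c.supp)).toFinset) := by
  classical
  intro a ha b hb
  rw [Set.Finite.mem_toFinset] at ha hb
  obtain ⟨a', ha', rfl⟩ := ha
  obtain ⟨b', hb', rfl⟩ := hb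
  rw [SimpleGraph.ConnectedComponent.mem_supp_iff] at ha' hb'
  have hr : (G.induce s).Reachable a' b' :=
    SimpleGraph.ConnectedComponent.exact (ha'.trans hb'.symm)
  obtain ⟨w⟩ := hr
  refine ⟨w.map (inducehom G s), ?_⟩
  intro x hx
  replace hx : x ∈ (w.map (inducehom G s)).support := hx
  rw [SimpleGraph.Walk.support_map, List.mem_map] at hx
  obtain ⟨v', hv', rfl⟩ := hx
  rw [Set.Finite.mem_toFinset]
  refine ⟨v', ?_, rfl⟩
  rw [SimpleGraph.ConnectedComponent.mem_supp_iff]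
  rw [supp_walk_mem w hv', hb']

lemma clos_lemma {s : Set (Fin n)} (X : Set (Fin n))
    (hN : ∀ v, v ∈ nbhd G X → v ∉ s)
    {a b : ↥s} (ha : ↑a ∈ X) (hr : (G.induce s).Reachable a b) : ↑b ∈ X := by
  obtain ⟨w⟩ := hr
  induction w with
  | nil => exact ha
  | @cons u v wend h p ih =>
    refine ih ?_
    by_contra hv
    exact hN ↑v ⟨hv, ↑u, ha, h⟩ v.2

end Bridge

lemma len_chainsF {n : ℕ} {G : SimpleGraph (Fin n)} :
    ∀ m, ∀ l ∈ chainsF G m, l.length = m + 1 := by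
  classical
  intro m
  induction m with
  | zero =>
    intro l hl
    simp only [chainsF, Finset.mem_image] at hl
    obtain ⟨v, _, rfl⟩ := hl
    rfl
  | succ m ih =>
    intro l hl
    simp only [chainsF, Finset.mem_biUnion, Finset.mem_image] at hl
    obtain ⟨t, ht, v, _, rfl⟩ := hl
    simp [ih t ht]

lemma Kconst_ge_one {α c : ℝ} (hα : 0 < α) (hc : 0 < c) {f : ℕ → ℝ}
    (hf : ∀ k : ℕ, 0 < k → c ≤ f k) : 1 ≤ Kconst α f := by
  have hne : {u : ℕ | 1 ≤ u ∧ ∀ k : ℕ, u ≤ k → 1/α < (k:ℝ) * f k}.Nonempty := by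
    refine ⟨⌊1/(α*c)⌋₊ + 1, by omega, ?_⟩
    intro k hk
    have hk1 : (1:ℕ) ≤ k := le_trans (by omega) hk
    have hαc : 0 < α*c := mul_pos hα hc
    have hkr : 1/(α*c) < (k:ℝ) := by
      have h1 : (1/(α*c)) < (⌊1/(α*c)⌋₊ : ℝ) + 1 := Nat.lt_floor_add_one _
      have h2 : ((⌊1/(α*c)⌋₊ + 1 : ℕ) : ℝ) ≤ (k:ℝ) := by exact_mod_cast hk
      push_cast at h2
      linarith
    have h4 : (1:ℝ) < k*(α*c) := by
      have := (div_lt_iff₀ hαc).mp hkr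
      linarith
    have h3 : 1/α < (k:ℝ)*c := by
      rw [div_lt_iff₀ hα]
      nlinarith
    have h5 : (k:ℝ)*c ≤ k*f k :=
      mul_le_mul_of_nonneg_left (hf k (by omega)) (Nat.cast_nonneg _)
    linarith
  exact (Nat.sInf_mem hne).1
section MeasureAux

instance bern_prob (p : ENNReal) : IsProbabilityMeasure (bern p) :=
  PMF.toMeasure.isProbabilityMeasure _

instance delMeasure_prob (n : ℕ) (α : ℝ) : IsProbabilityMeasure (delMeasure n α) := by
  unfold delMeasure; infer_instance

lemma bern_true (p : ENNReal) : bern p {true} = min p 1 := by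
  rw [bern, PMF.toMeasure_apply_singleton _ _ (by trivial)]
  refine (PMF.bernoulli_apply _ true).trans ?_
  simp

lemma delMeasure_allTrue {n : ℕ} (α : ℝ) (D : Finset (Fin n)) :
    delMeasure n α {ω : Fin n → Bool | ∀ v ∈ D, ω v = true}
      = (min (ENNReal.ofReal ((n : ℝ) ^ (-α))) 1) ^ D.card := by
  classical
  have hset : {ω : Fin n → Bool | ∀ v ∈ D, ω v = true}
      = Set.univ.pi (fun v => if v ∈ D then ({true} : Set Bool) else Set.univ) := by
    ext ω
    simp only [Set.mem_setOf_eq, Set.mem_pi, Set.mem_univ, forall_true_left]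
    constructor
    · intro h v
      by_cases hv : v ∈ D <;> simp [hv, h v]
    · intro h v hv
      have := h v
      simpa [hv] using this
  rw [hset, delMeasure, Measure.pi_pi]
  have : ∀ v : Fin n, bern (ENNReal.ofReal ((n : ℝ) ^ (-α)))
      (if v ∈ D then ({true} : Set Bool) else Set.univ)
      = if v ∈ D then (min (ENNReal.ofReal ((n : ℝ) ^ (-α))) 1) else 1 := by
    intro v
    by_cases hv : v ∈ D
    · simp [hv, bern_true]
    · simp only [if_neg hv]; exact measure_univ
  rw [Finset.prod_congr rfl (fun v _ => this v)]
  rw [Finset.prod_ite_mem Finset.univ D (fun _ => min (ENNReal.ofReal ((n : ℝ) ^ (-α))) 1)]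
  simp [Finset.univ_inter, Finset.prod_const]

lemma delMeasure_manyDeleted {n : ℕ} (α : ℝ) (S : Finset (Fin n)) (T : ℕ) :
    delMeasure n α {ω : Fin n → Bool | T ≤ (S.filter (fun v => ω v = true)).card}
      ≤ (2 : ENNReal) ^ S.card * (min (ENNReal.ofReal ((n : ℝ) ^ (-α))) 1) ^ T := by
  classical
  have hsub : {ω : Fin n → Bool | T ≤ (S.filter (fun v => ω v = true)).card}
      ⊆ ⋃ D ∈ S.powersetCard T, {ω : Fin n → Bool | ∀ v ∈ D, ω v = true} := by
    intro ω hω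
    obtain ⟨D, hDsub, hDcard⟩ := Finset.exists_subset_card_eq hω
    refine Set.mem_iUnion₂.mpr ⟨D, ?_, ?_⟩
    · exact Finset.mem_powersetCard.mpr ⟨hDsub.trans (Finset.filter_subset _ _), hDcard⟩
    · intro v hv
      exact (Finset.mem_filter.mp (hDsub hv)).2
  refine (measure_mono hsub).trans ?_
  refine (measure_biUnion_finset_le _ _).trans ?_
  have : ∀ D ∈ S.powersetCard T,
      delMeasure n α {ω : Fin n → Bool | ∀ v ∈ D, ω v = true}
        = (min (ENNReal.ofReal ((n : ℝ) ^ (-α))) 1) ^ T := by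
    intro D hD
    rw [delMeasure_allTrue α D, (Finset.mem_powersetCard.mp hD).2]
  rw [Finset.sum_congr rfl this]
  rw [Finset.sum_const, Finset.card_powersetCard]
  rw [nsmul_eq_mul]
  refine mul_le_mul_left ?_ _
  have hch : S.card.choose T ≤ 2 ^ S.card := by
    rcases le_or_gt T S.card with h | h
    · calc S.card.choose T ≤ ∑ m ∈ Finset.range (S.card+1), S.card.choose m :=
          Finset.single_le_sum (fun _ _ => Nat.zero_le _) (Finset.mem_range.mpr (by omega))
        _ = 2 ^ S.card := Nat.sum_range_choose S.card
    · rw [Nat.choose_eq_zero_of_lt h]; exact Nat.zero_le _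
  calc (S.card.choose T : ENNReal) ≤ ((2 ^ S.card : ℕ) : ENNReal) := by exact_mod_cast hch
    _ = (2 : ENNReal) ^ S.card := by push_cast; ring

end MeasureAux

set_option maxHeartbeats 1000000 in
lemma main_det {n : ℕ} (G : SimpleGraph (Fin n)) {α c : ℝ} {Δ : ℕ} {f : ℕ → ℝ}
    (hα : 0 < α) (hα1 : α ≤ 1) (hc : 0 < c) (hΔ : 1 ≤ Δ)
    (hf : ∀ k : ℕ, 0 < k → c ≤ f k)
    {K : ℕ} (hK1 : 1 ≤ K)
    (hexp : IsFExpander G f)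
    {L A D T : ℕ} (hL1 : 1 ≤ L) (hT1 : 1 ≤ T) (hTA : T ≤ A) (hTD : T ≤ D)
    (hA3 : ∀ d : ℕ, 3/α < (d:ℝ) → A ≤ d)
    (hD : (D:ℝ) < (3*c/(4*(1+c)))*L/2 + 1)
    (ω : Fin n → Bool)
    (hHa : ∀ l : List (Fin n), l.Chain' G.Adj → l ≠ [] → l.length ≤ 4*L →
        (l.toFinset.filter (fun v => ω v = true)).card < T)
    (C₁ : (G.induce (survivors ω)).ConnectedComponent) :
    IsBetaExpander ((G.induce (survivors ω)).induce C₁.supp)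
      ((1/(Δ:ℝ)) * min (1/(K:ℝ)) (α*c/4)) := by
  classical
  set θ : ℝ := 3*c/(4*(1+c)) with hθdef
  have hθpos : 0 < θ := by
    apply div_pos (by linarith) (by linarith)
  set β : ℝ := (1/(Δ:ℝ)) * min (1/(K:ℝ)) (α*c/4) with hβdef
  intro U hUne hU2
  set k := U.ncard with hk
  have hk1 : 1 ≤ k := by
    rw [hk]
    exact (Set.ncard_pos).mpr hUne
  -- translate to Fin n level
  set ι : ↥C₁.supp → Fin n := fun x => (x.1 : Fin n) with hι
  have hιinj : Function.Injective ι := by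
    intro a b h
    exact Subtype.ext (Subtype.ext h)
  set Ut : Set (Fin n) := ι '' U with hUt
  have hUtk : Ut.ncard = k := Set.ncard_image_of_injective U hιinj
  set Ct : Set (Fin n) := Subtype.val '' C₁.supp with hCt
  set m := C₁.supp.ncard with hm
  have hCtm : Ct.ncard = m := Set.ncard_image_of_injective _ Subtype.val_injective
  have hUtCt : Ut ⊆ Ct := by
    rintro _ ⟨x, hx, rfl⟩
    exact ⟨x.1, x.2, rfl⟩
  have hCtV : Ct ⊆ (survivors ω) := by
    rintro _ ⟨y, _, rfl⟩
    exact y.2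
  have hUtV : Ut ⊆ (survivors ω) := hUtCt.trans hCtV
  have hkm : (k:ℝ) ≤ (m:ℝ)/2 := by
    have := hU2
    rwa [Nat.card_coe_set_eq] at this
  have hmn : (m:ℝ) ≤ (n:ℝ) := by
    have h1 : m ≤ Nat.card ↥(survivors ω) := by
      rw [hm, ← Set.ncard_univ]
      exact Set.ncard_le_ncard (Set.subset_univ _) (Set.toFinite _)
    have h2 : Nat.card ↥(survivors ω) = (survivors ω).ncard := Nat.card_coe_set_eq (survivors ω)
    have h3 : (survivors ω).ncard ≤ n := by
      have h4 : (Set.univ : Set (Fin n)).ncard = n := by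
        rw [Set.ncard_univ]; simp
      calc (survivors ω).ncard ≤ (Set.univ : Set (Fin n)).ncard :=
            Set.ncard_le_ncard (Set.subset_univ _) (Set.toFinite _)
        _ = n := h4
    exact_mod_cast (h1.trans (h2 ▸ h3))
  have hkn : (k:ℝ) ≤ (n:ℝ)/2 := by linarith
  -- the neighbourhood correspondence
  set H := (G.induce (survivors ω)).induce C₁.supp with hH
  set B : Set (Fin n) := nbhd G Ut ∩ (survivors ω) with hB
  have htrans : ι '' (nbhd H U) = B := by
    ext v
    constructor
    · rintro ⟨x, ⟨hxU, u, huU, hadj⟩, rfl⟩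
      refine ⟨⟨?_, ι u, ⟨u, huU, rfl⟩, hadj⟩, x.1.2⟩
      rintro ⟨x', hx'U, hx'eq⟩
      exact hxU (hιinj hx'eq ▸ hx'U)
    · rintro ⟨⟨hvUt, _, ⟨u, huU, rfl⟩, hadj⟩, hvs⟩
      have hadjG : (G.induce (survivors ω)).Adj u.1 ⟨v, hvs⟩ := hadj
      have hvsupp : (⟨v, hvs⟩ : ↥(survivors ω)) ∈ C₁.supp := by
        rw [SimpleGraph.ConnectedComponent.mem_supp_iff]
        rw [← (SimpleGraph.ConnectedComponent.mem_supp_iff _ _).mp u.2]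
        exact SimpleGraph.ConnectedComponent.sound hadjG.symm.reachable
      refine ⟨⟨⟨v, hvs⟩, hvsupp⟩, ⟨?_, u, huU, hadj⟩, rfl⟩
      intro hxU
      exact hvUt ⟨⟨⟨v, hvs⟩, hvsupp⟩, hxU, rfl⟩
  set b := B.ncard with hbdef
  have hbeq : (nbhd H U).ncard = b := by
    rw [hbdef, ← htrans]
    exact (Set.ncard_image_of_injective _ hιinj).symm
  rw [show (nbhd H U).ncard = b from hbeq]
  -- key sub-lemma: surviving neighbourhoods of subsets of Ut are nonempty
  have hBX : ∀ X : Set (Fin n), X ⊆ Ut → X.Nonempty → (nbhd G X ∩ (survivors ω)).Nonempty := by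
    intro X hXUt hXne
    by_contra hempty
    rw [Set.not_nonempty_iff_eq_empty] at hempty
    have hN : ∀ v, v ∈ nbhd G X → v ∉ (survivors ω) := by
      intro v hv hs
      exact absurd (Set.mem_inter hv hs) (hempty ▸ Set.notMem_empty v)
    obtain ⟨x0, hx0⟩ := hXne
    obtain ⟨y0, hy0U, hy0⟩ := hXUt hx0
    have hCtX : Ct ⊆ X := by
      rintro _ ⟨y, hy, rfl⟩
      have h1 : (G.induce (survivors ω)).connectedComponentMk y0.1 = C₁ :=
        (SimpleGraph.ConnectedComponent.mem_supp_iff _ _).mp y0.2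
      have h2 : (G.induce (survivors ω)).connectedComponentMk y = C₁ :=
        (SimpleGraph.ConnectedComponent.mem_supp_iff _ _).mp hy
      have hr : (G.induce (survivors ω)).Reachable y0.1 y :=
        SimpleGraph.ConnectedComponent.exact (h1.trans h2.symm)
      have hx0' : ((y0.1 : ↥(survivors ω)) : Fin n) ∈ X := by
        rw [show ((y0.1 : ↥(survivors ω)) : Fin n) = ι y0 from rfl, hy0]
        exact hx0
      exact clos_lemma X hN hx0' hr
    have hmk : m ≤ k := by
      rw [← hCtm, ← hUtk]
      exact (Set.ncard_le_ncard hCtX (Set.toFinite _)).trans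
        (Set.ncard_le_ncard hXUt (Set.toFinite _))
    have : (m:ℝ) ≤ (k:ℝ) := by exact_mod_cast hmk
    have hk0 : (1:ℝ) ≤ (k:ℝ) := by exact_mod_cast hk1
    linarith
  rcases le_or_gt (β * k) 1 with hsmall | hbig
  · -- small case: one surviving neighbour suffices
    have hBne : B.Nonempty := hBX Ut (subset_refl _) (by
      rw [hUt]; exact hUne.image _)
    have : 1 ≤ b := (Set.ncard_pos).mpr hBne
    have : (1:ℝ) ≤ (b:ℝ) := by exact_mod_cast this
    linarith
  · by_contra hcon
    push_neg at hcon
    have hblt : (b:ℝ) < β * k := hcon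
    -- pieces
    set W : Set (Fin n) := Ut ∪ nbhd G Ut with hW
    have hUtW : Ut ⊆ W := Set.subset_union_left
    have hNW : nbhd G Ut ⊆ W := Set.subset_union_right
    set pc : ↥W → Set (Fin n) :=
      fun x => Subtype.val '' ((G.induce W).connectedComponentMk x).supp with hpc
    have hpc_self : ∀ x : ↥W, ↑x ∈ pc x := by
      intro x; exact ⟨x, rfl, rfl⟩
    have hpc_sub : ∀ x : ↥W, pc x ⊆ W := by
      rintro x _ ⟨y, _, rfl⟩; exact y.2
    have hpc_eq : ∀ x y : ↥W, (↑y : Fin n) ∈ pc x → pc y = pc x := by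
      rintro x y ⟨y', hy', heq⟩
      have : y' = y := Subtype.ext heq
      subst this
      rw [SimpleGraph.ConnectedComponent.mem_supp_iff] at hy'
      rw [hpc]
      simp only [hy']
    have hpc_adj : ∀ x y : ↥W, G.Adj ↑x ↑y → pc x = pc y := by
      intro x y hadj
      have : (G.induce W).Adj x y := hadj
      rw [hpc]
      simp only [SimpleGraph.ConnectedComponent.sound this.reachable]
    set PS : Finset (Set (Fin n)) :=
      ((Set.toFinite W).toFinset.attach).image
        (fun z => pc ⟨z.1, ((Set.toFinite W).mem_toFinset).mp z.2⟩) with hPS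
    have hPS_mem : ∀ P ∈ PS, ∃ x : ↥W, pc x = P := by
      intro P hP
      rw [hPS, Finset.mem_image] at hP
      obtain ⟨z, _, hz⟩ := hP
      exact ⟨_, hz⟩
    have hPS_mem' : ∀ x : ↥W, pc x ∈ PS := by
      intro x
      rw [hPS, Finset.mem_image]
      refine ⟨⟨x.1, ((Set.toFinite W).mem_toFinset).mpr x.2⟩, Finset.mem_attach _ _, rfl⟩
    -- partition sums
    have hpart : ∀ Z : Set (Fin n), Z ⊆ W → Z.ncard = ∑ P ∈ PS, (P ∩ Z).ncard := by
      intro Z hZW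
      have hZfin := Set.toFinite Z
      have hrw : hZfin.toFinset = PS.biUnion (fun P => (Set.toFinite (P ∩ Z)).toFinset) := by
        ext z
        rw [Set.Finite.mem_toFinset, Finset.mem_biUnion]
        constructor
        · intro hz
          refine ⟨pc ⟨z, hZW hz⟩, hPS_mem' _, ?_⟩
          rw [Set.Finite.mem_toFinset]
          exact ⟨hpc_self _, hz⟩
        · rintro ⟨P, _, hzP⟩
          rw [Set.Finite.mem_toFinset] at hzP
          exact hzP.2
      have hdisj : ∀ P ∈ PS, ∀ P' ∈ PS, P ≠ P' →
          Disjoint ((Set.toFinite (P ∩ Z)).toFinset) ((Set.toFinite (P' ∩ Z)).toFinset) := by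
        intro P hP P' hP' hne
        obtain ⟨x, rfl⟩ := hPS_mem P hP
        obtain ⟨x', rfl⟩ := hPS_mem P' hP'
        rw [Finset.disjoint_left]
        intro z hz hz'
        rw [Set.Finite.mem_toFinset] at hz hz'
        have hzW : z ∈ W := (hpc_sub x) hz.1
        have e1 : pc ⟨z, hzW⟩ = pc x := hpc_eq x ⟨z, hzW⟩ hz.1
        have e2 : pc ⟨z, hzW⟩ = pc x' := hpc_eq x' ⟨z, hzW⟩ hz'.1
        exact hne (e1 ▸ e2 ▸ rfl)
      rw [Set.ncard_eq_toFinset_card Z hZfin, hrw, Finset.card_biUnion hdisj]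
      refine Finset.sum_congr rfl ?_
      intro P _
      rw [Set.ncard_eq_toFinset_card _ (Set.toFinite (P ∩ Z))]
    -- per-piece facts
    have hpiece : ∀ P ∈ PS, (P ∩ Ut).Nonempty ∧ P ∩ nbhd G Ut = nbhd G (P ∩ Ut) := by
      intro P hP
      obtain ⟨x, rfl⟩ := hPS_mem P hP
      constructor
      · rcases (hpc_sub x) (hpc_self x) with hxUt | hxN
        · exact ⟨x, hpc_self x, hxUt⟩
        · obtain ⟨hnot, u, huUt, hadj⟩ := hxN
          have huW : u ∈ W := hUtW huUt
          have : pc ⟨u, huW⟩ = pc x := hpc_adj ⟨u, huW⟩ x hadj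
          exact ⟨u, this ▸ hpc_self ⟨u, huW⟩, huUt⟩
      · ext v
        constructor
        · rintro ⟨hvP, hvUt, u, huUt, hadj⟩
          have huW : u ∈ W := hUtW huUt
          have hvW : v ∈ W := (hpc_sub x) hvP
          have hpcu : pc ⟨u, huW⟩ = pc ⟨v, hvW⟩ := hpc_adj _ _ hadj
          have hpcv : pc ⟨v, hvW⟩ = pc x := hpc_eq x ⟨v, hvW⟩ hvP
          refine ⟨?_, u, ⟨(hpcu.trans hpcv) ▸ hpc_self ⟨u, huW⟩, huUt⟩, hadj⟩
          rintro ⟨_, hvUt'⟩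
          exact hvUt hvUt'
        · rintro ⟨hvn, u, ⟨huP, huUt⟩, hadj⟩
          have huW : u ∈ W := hUtW huUt
          have hvUtn : v ∉ Ut := by
            intro hvUt
            have hvW : v ∈ W := hUtW hvUt
            have hpcu : pc ⟨u, huW⟩ = pc ⟨v, hvW⟩ := hpc_adj _ _ hadj
            have hpcu2 : pc ⟨u, huW⟩ = pc x := hpc_eq x ⟨u, huW⟩ huP
            exact hvn ⟨(hpcu.symm.trans hpcu2) ▸ hpc_self ⟨v, hvW⟩, hvUt⟩
          have hvN : v ∈ nbhd G Ut := ⟨hvUtn, u, huUt, hadj⟩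
          have hvW : v ∈ W := hNW hvN
          have hpcu : pc ⟨u, huW⟩ = pc ⟨v, hvW⟩ := hpc_adj _ _ hadj
          have hpcu2 : pc ⟨u, huW⟩ = pc x := hpc_eq x ⟨u, huW⟩ huP
          exact ⟨(hpcu.symm.trans hpcu2) ▸ hpc_self ⟨v, hvW⟩, hvN⟩
    -- sums over pieces
    have hPW : ∀ P ∈ PS, P ⊆ W := by
      intro P hP
      obtain ⟨x, rfl⟩ := hPS_mem P hP
      exact hpc_sub x
    have hsum_u : k = ∑ P ∈ PS, (P ∩ Ut).ncard := by
      rw [← hUtk]; exact hpart Ut hUtW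
    have hBW : B ⊆ W := by
      rw [hB]; exact (Set.inter_subset_left).trans hNW
    have hsum_b : b = ∑ P ∈ PS, (P ∩ B).ncard := by
      rw [hbdef]; exact hpart B hBW
    set κ : ℝ := max (K:ℝ) (4/(α*c)) with hκ
    have hαc : 0 < α*c := mul_pos hα hc
    have hκpos : 0 < κ := lt_of_lt_of_le (by positivity) (le_max_right _ _)
    have hK0 : (0:ℝ) < (K:ℝ) := by exact_mod_cast hK1
    have hminpos : 0 ≤ min (1/(K:ℝ)) (α*c/4) := le_min (by positivity) (by positivity)
    have hβle : β ≤ min (1/(K:ℝ)) (α*c/4) := by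
      rw [hβdef]
      have h1 : (1:ℝ)/(Δ:ℝ) ≤ 1 := by
        apply div_le_one_of_le₀
        · exact_mod_cast hΔ
        · positivity
      calc (1/(Δ:ℝ)) * min (1/(K:ℝ)) (α*c/4) ≤ 1 * min (1/(K:ℝ)) (α*c/4) :=
            mul_le_mul_of_nonneg_right h1 hminpos
        _ = min (1/(K:ℝ)) (α*c/4) := one_mul _
    have hκβ : κ * β ≤ 1 := by
      rcases max_cases (K:ℝ) (4/(α*c)) with ⟨hmax, _⟩ | ⟨hmax, _⟩
      · have hβK : β ≤ 1/(K:ℝ) := hβle.trans (min_le_left _ _)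
        rw [hκ, hmax]
        calc (K:ℝ) * β ≤ (K:ℝ) * (1/(K:ℝ)) :=
              mul_le_mul_of_nonneg_left hβK (le_of_lt hK0)
          _ = 1 := by field_simp
      · have hβαc : β ≤ α*c/4 := hβle.trans (min_le_right _ _)
        rw [hκ, hmax]
        calc (4/(α*c)) * β ≤ (4/(α*c)) * (α*c/4) :=
              mul_le_mul_of_nonneg_left hβαc (by positivity)
          _ = 1 := by field_simp
    by_cases hall : ∀ P ∈ PS, ((P ∩ Ut).ncard : ℝ) ≤ κ * ((P ∩ B).ncard : ℝ)
    · -- all pieces good: contradiction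
      have h1 : (k:ℝ) ≤ κ * (b:ℝ) := by
        have hsum : ((∑ P ∈ PS, (P ∩ Ut).ncard : ℕ) : ℝ)
            ≤ ∑ P ∈ PS, κ * (((P ∩ B).ncard : ℕ) : ℝ) := by
          push_cast
          exact Finset.sum_le_sum (fun P hP => hall P hP)
        rw [← Finset.mul_sum] at hsum
        have e1 : ((∑ P ∈ PS, (P ∩ Ut).ncard : ℕ) : ℝ) = (k:ℝ) := by
          rw [← hsum_u]
        have e2 : (∑ P ∈ PS, (((P ∩ B).ncard : ℕ) : ℝ)) = (b:ℝ) := by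
          rw [hsum_b]; push_cast; ring
        rw [e1, e2] at hsum
        exact hsum
      have h2 : κ * (b:ℝ) < κ * (β * k) := mul_lt_mul_of_pos_left hblt hκpos
      have hk0 : (1:ℝ) ≤ (k:ℝ) := by exact_mod_cast hk1
      have h5 : κ*(β*(k:ℝ)) = (κ*β)*(k:ℝ) := by ring
      have h6 : (κ*β)*(k:ℝ) ≤ 1*(k:ℝ) := mul_le_mul_of_nonneg_right hκβ (by positivity)
      linarith
    · push_neg at hall
      obtain ⟨P, hPPS, hPbad⟩ := hall
      obtain ⟨hPUne, hPN⟩ := hpiece P hPPS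
      have hPsubW : P ⊆ W := hPW P hPPS
      set uP := (P ∩ Ut).ncard with huP
      set bP := (P ∩ B).ncard with hbP
      set NP := nbhd G (P ∩ Ut) with hNP
      set tP := NP.ncard with htP
      have hNPP : NP ⊆ P := by
        rw [← hPN]; exact Set.inter_subset_left
      have hPBeq : P ∩ B = NP ∩ (survivors ω) := by
        rw [hB, ← hPN]
        ext y
        simp only [Set.mem_inter_iff]
        tauto
      have hbP1 : 1 ≤ bP := by
        have hne := hBX (P ∩ Ut) (Set.inter_subset_right) hPUne
        rw [← hNP, ← hPBeq] at hne
        exact (Set.ncard_pos).mpr hne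
      have huP1 : 1 ≤ uP := (Set.ncard_pos).mpr hPUne
      have huPk : uP ≤ k := by
        rw [← hUtk]
        exact Set.ncard_le_ncard (Set.inter_subset_right) (Set.toFinite _)
      have huPn2 : (((P ∩ Ut).ncard : ℕ) : ℝ) ≤ ((Nat.card (Fin n)) : ℝ)/2 := by
        rw [Nat.card_eq_fintype_card, Fintype.card_fin]
        have : ((uP:ℕ):ℝ) ≤ (k:ℝ) := by exact_mod_cast huPk
        linarith
      have hexp1 : f uP * uP ≤ ((nbhd G (P ∩ Ut)).ncard : ℝ) := hexp (P ∩ Ut) hPUne huPn2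
      have hcf : c ≤ f uP := hf uP huP1
      have huP0 : (0:ℝ) ≤ (uP:ℝ) := Nat.cast_nonneg _
      have hctP : c * uP ≤ (tP:ℝ) := by
        have : c * uP ≤ f uP * uP := mul_le_mul_of_nonneg_right hcf huP0
        exact this.trans hexp1
      -- bad piece facts
      have hbPκ : κ * (bP:ℝ) < uP := hPbad
      have hbP0 : (1:ℝ) ≤ (bP:ℝ) := by exact_mod_cast hbP1
      have huP4 : 4/(α*c) < (uP:ℝ) := by
        have h1 : κ ≤ κ * bP := le_mul_of_one_le_right (le_of_lt hκpos) hbP0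
        have h2 : κ < (uP:ℝ) := lt_of_le_of_lt h1 hbPκ
        exact lt_of_le_of_lt (le_max_right _ _) h2
      have hbPαc : (bP:ℝ) < α*c/4 * uP := by
        have h4αc : 4/(α*c) ≤ κ := le_max_right _ _
        have h1 : (bP:ℝ) * (4/(α*c)) ≤ (bP:ℝ) * κ := by
          exact mul_le_mul_of_nonneg_left h4αc (Nat.cast_nonneg _)
        have h2 : (bP:ℝ) * (4/(α*c)) < uP := by
          refine h1.trans_lt ?_
          rw [mul_comm]
          exact hbPκ
        rw [← mul_div_assoc] at h2
        have h3 : (bP:ℝ) * 4 < uP * (α*c) := (div_lt_iff₀ hαc).mp h2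
        linarith
      set dP := (NP \ (survivors ω)).ncard with hdP
      have hsplit : (NP ∩ (survivors ω)).ncard + (NP \ (survivors ω)).ncard = tP :=
        Set.ncard_inter_add_ncard_diff_eq_ncard NP (survivors ω) (Set.toFinite _)
      have hbPeq2 : bP = (NP ∩ (survivors ω)).ncard := by rw [hbP, hPBeq]
      have hdPr : (dP:ℝ) = (tP:ℝ) - (bP:ℝ) := by
        rw [hbPeq2]
        have : ((NP ∩ (survivors ω)).ncard : ℝ) + (dP : ℝ) = (tP:ℝ) := by
          exact_mod_cast congrArg (Nat.cast : ℕ → ℝ) hsplit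
        linarith
      have htP0 : (0:ℝ) ≤ (tP:ℝ) := Nat.cast_nonneg _
      have hbPtP : (bP:ℝ) ≤ α/4 * tP := by
        have e1 : α*c/4*(uP:ℝ) = α/4*(c*uP) := by ring
        have e2 : α/4*(c*(uP:ℝ)) ≤ α/4*(tP:ℝ) :=
          mul_le_mul_of_nonneg_left hctP (by linarith)
        linarith
      have hdP34 : (3:ℝ)/4 * tP ≤ (dP:ℝ) := by
        have e1 : α/4*(tP:ℝ) ≤ 1/4*(tP:ℝ) :=
          mul_le_mul_of_nonneg_right (by linarith) htP0
        linarith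
      have hdP3α : 3/α < (dP:ℝ) := by
        have h2 : (4:ℝ) < uP * (α*c) := by
          have := (div_lt_iff₀ hαc).mp huP4
          linarith
        have h1 : 4/α < c * uP := by
          rw [div_lt_iff₀ hα]
          nlinarith [h2]
        have h3 : 3/α = 3/4 * (4/α) := by
          field_simp
        have h4 : 3/4 * (4/α) < 3/4 * (c*uP) := by
          apply mul_lt_mul_of_pos_left h1 (by norm_num)
        have h5 : 3/4*(c*(uP:ℝ)) ≤ 3/4*(tP:ℝ) :=
          mul_le_mul_of_nonneg_left hctP (by norm_num)
        linarith
      have hdPA : A ≤ dP := hA3 dP hdP3α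
      -- size of the piece
      have hdisjUN : Disjoint (P ∩ Ut) NP := by
        rw [Set.disjoint_left]
        intro y hy hyN
        exact hyN.1 hy
      have hPsplit : P = (P ∩ Ut) ∪ NP := by
        rw [← hPN, ← Set.inter_union_distrib_left, ← hW]
        exact (Set.inter_eq_self_of_subset_left hPsubW).symm
      set zP := P.ncard with hzPd
      have hzP : zP = uP + tP := by
        rw [hzPd]
        conv_lhs => rw [hPsplit]
        rw [Set.ncard_union_eq hdisjUN (Set.toFinite _) (Set.toFinite _)]
      have hθz : θ * (zP:ℝ) ≤ 3/4 * (tP:ℝ) := by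
        rw [hzP, hθdef]
        push_cast
        rw [div_mul_eq_mul_div, div_le_iff₀ (by linarith : (0:ℝ) < 4*(1+c))]
        have : c * (uP:ℝ) ≤ (tP:ℝ) := hctP
        ring_nf
        nlinarith [this]
      clear_value uP bP tP dP zP κ
      -- covering walk
      obtain ⟨x0, hx0P⟩ : ∃ x0 : ↥W, pc x0 = P := hPS_mem P hPPS
      have hPF : SConn G ((Set.toFinite P).toFinset) := by
        rw [← hx0P]
        exact supp_sconn ((G.induce W).connectedComponentMk x0)
      have hPFne : ((Set.toFinite P).toFinset).Nonempty := by
        obtain ⟨y, hy⟩ := hPUne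
        exact ⟨y, (Set.Finite.mem_toFinset _).mpr hy.1⟩
      obtain ⟨v, hvP, w, hwsupp, hwlen⟩ := sconn_cover hPF hPFne
      have hPFcard : ((Set.toFinite P).toFinset).card = zP := by
        rw [hzPd]
        exact (Set.ncard_eq_toFinset_card _ _).symm
      set l0 := w.support with hl0
      have hl0chain : l0.Chain' G.Adj := w.isChain_adj_support
      have hl0ne : l0 ≠ [] := w.support_ne_nil
      have hlen2z : l0.length + 1 ≤ 2*zP := by
        rw [hl0, SimpleGraph.Walk.length_support]
        rw [hPFcard] at hwlen
        omega
      have hl0toF : l0.toFinset = (Set.toFinite P).toFinset := by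
        ext y
        rw [List.mem_toFinset, Set.Finite.mem_toFinset]
        rw [hl0]
        rw [← Set.Finite.mem_toFinset (Set.toFinite P)]
        exact hwsupp y
      have hzP1 : 1 ≤ zP := by omega
      -- deleted vertices of the piece
      have hdel : dP ≤ (((Set.toFinite P).toFinset).filter (fun v => ω v = true)).card := by
        rw [hdP, Set.ncard_eq_toFinset_card _ (Set.toFinite (NP \ (survivors ω)))]
        apply Finset.card_le_card
        intro y hy
        rw [Set.Finite.mem_toFinset] at hy
        rw [Finset.mem_filter, Set.Finite.mem_toFinset]
        refine ⟨hNPP hy.1, ?_⟩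
        have : ¬ (ω y = false) := hy.2
        exact Bool.ne_false_iff.mp this
      rcases le_or_gt zP (2*L) with hz2L | h2Lz
      · -- small piece
        have hlen4L : l0.length ≤ 4*L := by omega
        have hHa1 := hHa l0 hl0chain hl0ne hlen4L
        rw [hl0toF] at hHa1
        omega
      · -- big piece: windows
        set len := l0.length with hlend
        have hlenpos : 1 ≤ len := by
          rw [hlend]
          exact List.length_pos_iff.mpr hl0ne
        have hL0 : 0 < 2*L := by omega
        set J := len/(2*L) + 1 with hJd
        have hwin : ∀ vv ∈ l0.toFinset, ∃ j < J,
            vv ∈ ((l0.drop (2*L*j)).take (2*L+1)).toFinset := by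
          intro vv hvv
          rw [List.mem_toFinset] at hvv
          obtain ⟨i, hi, rfl⟩ := List.mem_iff_getElem.mp hvv
          refine ⟨i/(2*L), ?_, ?_⟩
          · have : i/(2*L) ≤ len/(2*L) := Nat.div_le_div_right (by omega)
            omega
          · have hmod := Nat.div_add_mod i (2*L)
            have hr : i % (2*L) < 2*L := Nat.mod_lt _ hL0
            have hlt1 : i % (2*L) < ((l0.drop (2*L*(i/(2*L)))).take (2*L+1)).length := by
              simp only [List.length_take, List.length_drop]
              omega
            have heq : ((l0.drop (2*L*(i/(2*L)))).take (2*L+1))[i % (2*L)]'hlt1 = l0[i]'hi := by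
              rw [List.getElem_take, List.getElem_drop]
              congr 1
            rw [List.mem_toFinset, ← heq]
            exact List.getElem_mem hlt1
        have hd_cover : (Set.toFinite (NP \ (survivors ω))).toFinset ⊆
            (Finset.range J).biUnion (fun j =>
              ((l0.drop (2*L*j)).take (2*L+1)).toFinset.filter (fun v => ω v = true)) := by
          intro y hy
          rw [Set.Finite.mem_toFinset] at hy
          have hyl0 : y ∈ l0.toFinset := by
            rw [hl0toF, Set.Finite.mem_toFinset]
            exact hNPP hy.1
          obtain ⟨j, hj, hmem⟩ := hwin y hyl0
          rw [Finset.mem_biUnion]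
          refine ⟨j, Finset.mem_range.mpr hj, Finset.mem_filter.mpr ⟨hmem, ?_⟩⟩
          have : ¬ (ω y = false) := hy.2
          exact Bool.ne_false_iff.mp this
        have hcnt : ∀ j, (((l0.drop (2*L*j)).take (2*L+1)).toFinset.filter
            (fun v => ω v = true)).card ≤ T - 1 := by
          intro j
          by_cases hnil : (l0.drop (2*L*j)).take (2*L+1) = []
          · rw [hnil]
            simp
          · have hch : ((l0.drop (2*L*j)).take (2*L+1)).Chain' G.Adj :=
              (hl0chain.drop _).take _
            have hlen' : ((l0.drop (2*L*j)).take (2*L+1)).length ≤ 4*L := by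
              simp only [List.length_take, List.length_drop]
              omega
            have := hHa _ hch hnil hlen'
            omega
        have hdPJ : dP ≤ J * (T-1) := by
          have h1 : dP ≤ ((Set.toFinite (NP \ (survivors ω))).toFinset).card := by
            rw [hdP, Set.ncard_eq_toFinset_card _ (Set.toFinite (NP \ (survivors ω)))]
          have h2 := Finset.card_le_card hd_cover
          have h3 := Finset.card_biUnion_le (s := Finset.range J) (t := fun j =>
              ((l0.drop (2*L*j)).take (2*L+1)).toFinset.filter (fun v => ω v = true))
          have h4 : ∑ j ∈ Finset.range J, (((l0.drop (2*L*j)).take (2*L+1)).toFinset.filter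
              (fun v => ω v = true)).card ≤ ∑ _j ∈ Finset.range J, (T-1) :=
            Finset.sum_le_sum (fun j _ => hcnt j)
          rw [Finset.sum_const, Finset.card_range, smul_eq_mul] at h4
          omega
        -- final contradiction
        have hL0r : (0:ℝ) < (L:ℝ) := by exact_mod_cast hL1
        have hJr : (J:ℝ) ≤ 3*(zP:ℝ)/(2*L) := by
          have h1 : ((len/(2*L) : ℕ) : ℝ) ≤ (len:ℝ)/(2*(L:ℝ)) := by
            have h0 := Nat.cast_div_le (α := ℝ) (m := len) (n := 2*L)
            rw [Nat.cast_mul, Nat.cast_ofNat] at h0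
            exact h0
          have h2 : (len:ℝ) ≤ 2*(zP:ℝ) - 1 := by
            have : (len:ℝ) + 1 ≤ 2*(zP:ℝ) := by exact_mod_cast hlen2z
            linarith
          have hL2 : (0:ℝ) < 2*(L:ℝ) := by linarith
          have h3 : (1:ℝ) ≤ (zP:ℝ)/(2*L) := by
            rw [le_div_iff₀ hL2]
            have : (2*L:ℝ) ≤ (zP:ℝ) := by exact_mod_cast (le_of_lt h2Lz)
            linarith
          have h4 : (J:ℝ) = ((len/(2*L) : ℕ) : ℝ) + 1 := by
            rw [hJd]; push_cast; ring
          rw [h4]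
          have h5 : (len:ℝ)/(2*L) ≤ (2*(zP:ℝ) - 1)/(2*L) := (div_le_div_iff_of_pos_right hL2).mpr h2
          have h6 : (2*(zP:ℝ) - 1)/(2*L) ≤ (zP:ℝ)/L := by
            rw [div_le_div_iff₀ hL2 hL0r]
            have e : (2*(zP:ℝ) - 1)*(L:ℝ) = 2*((zP:ℝ)*(L:ℝ)) - L := by ring
            have e2 : (zP:ℝ)*(2*(L:ℝ)) = 2*((zP:ℝ)*(L:ℝ)) := by ring
            rw [e, e2]
            linarith
          have h7 : (zP:ℝ)/L + (zP:ℝ)/(2*L) = 3*(zP:ℝ)/(2*L) := by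
            have e1 : (zP:ℝ)/L = (2*(zP:ℝ))/(2*L) := by
              rw [mul_div_mul_left _ _ (two_ne_zero)]
            rw [e1, ← add_div, show (2*(zP:ℝ)+zP) = 3*zP by ring]
          linarith
        have hT1r : ((T:ℝ) - 1) ≤ (D:ℝ) - 1 := by
          have : (T:ℝ) ≤ (D:ℝ) := by exact_mod_cast hTD
          linarith
        have hdPJr : (dP:ℝ) ≤ (J:ℝ) * ((T:ℝ) - 1) := by
          have h1 : ((J * (T-1) : ℕ) : ℝ) = (J:ℝ) * ((T:ℝ) - 1) := by
            push_cast [Nat.cast_sub hT1]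
            ring
          have h2 : (dP:ℝ) ≤ ((J * (T-1) : ℕ) : ℝ) := by exact_mod_cast hdPJ
          linarith
        have hJ1 : (1:ℝ) ≤ (J:ℝ) := by
          rw [hJd]; push_cast; linarith [Nat.cast_nonneg (α := ℝ) (len/(2*L))]
        have hDθ : (D:ℝ) - 1 < θ * L / 2 := by
          rw [hθdef] at hD ⊢
          linarith
        have hstep1 : (dP:ℝ) < (J:ℝ) * (θ * L / 2) := by
          have h1 : (J:ℝ) * ((T:ℝ) - 1) ≤ (J:ℝ) * ((D:ℝ) - 1) :=
            mul_le_mul_of_nonneg_left hT1r (by linarith)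
          have h2 : (J:ℝ) * ((D:ℝ) - 1) < (J:ℝ) * (θ * L / 2) := by
            apply mul_lt_mul_of_pos_left hDθ (by linarith)
          linarith
        have hstep2 : (J:ℝ) * (θ * L / 2) ≤ (3*(zP:ℝ)/(2*L)) * (θ * L / 2) := by
          apply mul_le_mul_of_nonneg_right hJr (by positivity)
        have hstep3 : (3*(zP:ℝ)/(2*L)) * (θ * L / 2) = 3/4 * θ * zP := by
          field_simp
          ring
        have hzP0 : (1:ℝ) ≤ (zP:ℝ) := by exact_mod_cast hzP1
        have hfinal : θ * (zP:ℝ) ≤ (dP:ℝ) := by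
          calc θ * (zP:ℝ) ≤ 3/4 * (tP:ℝ) := hθz
            _ ≤ (dP:ℝ) := hdP34
        have hθzpos : 0 < θ * (zP:ℝ) := mul_pos hθpos (by linarith)
        have hlast : 3/4 * θ * (zP:ℝ) < θ * (zP:ℝ) := by linarith
        linarith


set_option maxHeartbeats 1000000 in
theorem giant_component_is_expander
    (α c : ℝ) (hα : 0 < α) (hα1 : α ≤ 1) (hc : 0 < c) (Δ : ℕ) (hΔ : 1 ≤ Δ)
    (f : ℕ → ℝ) (hf : ∀ k : ℕ, 0 < k → c ≤ f k) :
    ∀ ε : ℝ, 0 < ε → ∃ n₀ : ℕ, ∀ n : ℕ, n₀ ≤ n →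
      ∀ G : SimpleGraph (Fin n),
        (∀ v : Fin n, (G.neighborSet v).ncard ≤ Δ) →
        IsFExpander G f →
        1 - ENNReal.ofReal ε ≤ delMeasure n α
          {ω : Fin n → Bool |
            ∃ C₁ : (G.induce (survivors ω)).ConnectedComponent,
              (∀ C' : (G.induce (survivors ω)).ConnectedComponent,
                C'.supp.ncard ≤ C₁.supp.ncard) ∧
              IsBetaExpander ((G.induce (survivors ω)).induce C₁.supp)
                ((1 / (Δ : ℝ)) * min (1 / (Kconst α f : ℝ)) (α * c / 4))} := by
  classical
  intro ε hε
  have hK1 : 1 ≤ Kconst α f := Kconst_ge_one hα hc hf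
  -- constants
  set θ : ℝ := 3*c/(4*(1+c)) with hθdef
  have hθpos : 0 < θ := div_pos (by linarith) (by linarith)
  set A : ℕ := ⌊3/α⌋₊ + 1 with hAdef
  set L : ℕ := max 1 (⌈4/(α*θ)⌉₊) with hLdef
  have hL1 : 1 ≤ L := le_max_left _ _
  have hL0r : (0:ℝ) < (L:ℝ) := by exact_mod_cast hL1
  set D : ℕ := ⌈θ*(L:ℝ)/2⌉₊ with hDdef
  have hθL2 : 0 < θ*(L:ℝ)/2 := div_pos (mul_pos hθpos hL0r) two_pos
  have hD1 : 1 ≤ D := Nat.ceil_pos.mpr hθL2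
  set T : ℕ := min A D with hTdef
  have hA1 : 1 ≤ A := by omega
  have hT1 : 1 ≤ T := le_min hA1 hD1
  have hA3r : 3/α < (A:ℝ) := by
    rw [hAdef]
    push_cast
    exact Nat.lt_floor_add_one _
  have hA3 : ∀ d : ℕ, 3/α < (d:ℝ) → A ≤ d := by
    intro d hd
    have h1 : (⌊3/α⌋₊:ℝ) ≤ 3/α := Nat.floor_le (by positivity)
    have h2 : (⌊3/α⌋₊:ℝ) < (d:ℝ) := lt_of_le_of_lt h1 hd
    have h3 : ⌊3/α⌋₊ < d := by exact_mod_cast h2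
    omega
  have hDlt : (D:ℝ) < θ*(L:ℝ)/2 + 1 := Nat.ceil_lt_add_one (le_of_lt hθL2)
  have hLθ : 4/(α*θ) ≤ (L:ℝ) := by
    refine le_trans (Nat.le_ceil _) ?_
    exact_mod_cast Nat.cast_le.mpr (le_max_right 1 (⌈4/(α*θ)⌉₊))
  have hαθ : 0 < α*θ := mul_pos hα hθpos
  have hαT : 2 ≤ α * (T:ℝ) := by
    rcases min_cases A D with ⟨hmin, _⟩ | ⟨hmin, _⟩ <;> rw [hTdef, hmin]
    · -- T = A
      have h1 : α * (3/α) < α * (A:ℝ) := mul_lt_mul_of_pos_left hA3r hα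
      have h2 : α * (3/α) = 3 := by field_simp
      linarith
    · -- T = D
      have h1 : θ*(L:ℝ)/2 ≤ (D:ℝ) := Nat.le_ceil _
      have h2 : 4/(α*θ) * (θ/2) ≤ (L:ℝ) * (θ/2) :=
        mul_le_mul_of_nonneg_right hLθ (by linarith)
      have h3 : 4/(α*θ) * (θ/2) = 2/α := by
        field_simp
        ring
      have h4 : 2/α ≤ θ*(L:ℝ)/2 := by
        rw [← h3]
        calc 4/(α*θ) * (θ/2) ≤ (L:ℝ) * (θ/2) := h2
          _ = θ*(L:ℝ)/2 := by ring
      have h5 : 2/α ≤ (D:ℝ) := le_trans h4 h1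
      have h6 : α * (2/α) ≤ α * (D:ℝ) := mul_le_mul_of_nonneg_left h5 (le_of_lt hα)
      have h7 : α * (2/α) = 2 := by field_simp
      linarith
  set Cnat : ℕ := 4*L * Δ^(4*L) * 2^(4*L) with hCnat
  set Creal : ℝ := (Cnat : ℝ) with hCreal
  have hCreal0 : 0 ≤ Creal := Nat.cast_nonneg _
  refine ⟨max (max 1 (⌈(2/ε)^(α⁻¹)⌉₊ + 1)) (⌈2*Creal/ε⌉₊ + 1), ?_⟩
  intro n hn G hdeg hexp
  have hn1 : 1 ≤ n :=
    le_trans (le_trans (le_max_left _ _) (le_max_left _ _)) hn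
  have hnR1 : (1:ℝ) ≤ (n:ℝ) := by exact_mod_cast hn1
  have hnR0 : (0:ℝ) < (n:ℝ) := by linarith
  -- numeric bounds
  have hna : (n:ℝ)^(-α) ≤ ε/2 := by
    have hcl : ((2/ε)^(α⁻¹) : ℝ) ≤ (n:ℝ) := by
      have h1 : (⌈(2/ε)^(α⁻¹)⌉₊ + 1 : ℕ) ≤ n :=
        le_trans (le_trans (le_max_right _ _) (le_max_left _ _)) hn
      have h2 : ((2/ε)^(α⁻¹) : ℝ) ≤ (⌈(2/ε)^(α⁻¹)⌉₊ : ℝ) := Nat.le_ceil _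
      have h3 : ((⌈(2/ε)^(α⁻¹)⌉₊ + 1 : ℕ) : ℝ) ≤ (n:ℝ) := by exact_mod_cast h1
      push_cast at h3
      linarith
    have h2ε : (0:ℝ) < 2/ε := by positivity
    have hpow : 2/ε ≤ (n:ℝ)^α := by
      have hbase : (0:ℝ) ≤ (2/ε)^(α⁻¹) := Real.rpow_nonneg (le_of_lt h2ε) _
      have h2 : ((2/ε)^(α⁻¹))^α ≤ (n:ℝ)^α :=
        Real.rpow_le_rpow hbase hcl (le_of_lt hα)
      rwa [← Real.rpow_mul (le_of_lt h2ε), inv_mul_cancel₀ (ne_of_gt hα),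
        Real.rpow_one] at h2
    have h3 : (n:ℝ)^(-α) = ((n:ℝ)^α)⁻¹ := Real.rpow_neg (by linarith) α
    rw [h3]
    have h4 : ((n:ℝ)^α)⁻¹ ≤ (2/ε)⁻¹ := by
      apply inv_anti₀ h2ε hpow
    have h5 : ((2:ℝ)/ε)⁻¹ = ε/2 := by
      rw [inv_div]
    linarith
  have hnC : Creal * (n:ℝ) * (n:ℝ)^(-(α*(T:ℝ))) ≤ ε/2 := by
    have h2 : (n:ℝ)^(-(α*(T:ℝ))) ≤ (n:ℝ)^(-(2:ℝ)) :=
      Real.rpow_le_rpow_of_exponent_le hnR1 (by linarith)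
    have h3 : (n:ℝ)*(n:ℝ)^(-(2:ℝ)) = (n:ℝ)^(-(1:ℝ)) := by
      calc (n:ℝ)*(n:ℝ)^(-(2:ℝ)) = (n:ℝ)^(1:ℝ) * (n:ℝ)^(-(2:ℝ)) := by
            rw [Real.rpow_one]
        _ = (n:ℝ)^((1:ℝ) + (-2)) := (Real.rpow_add hnR0 _ _).symm
        _ = (n:ℝ)^(-(1:ℝ)) := by norm_num
    have h4 : (n:ℝ)^(-(1:ℝ)) = 1/(n:ℝ) := by
      rw [Real.rpow_neg_one, one_div]
    have h5 : 2*Creal/ε ≤ (n:ℝ) := by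
      have ha : (⌈2*Creal/ε⌉₊ + 1 : ℕ) ≤ n := le_trans (le_max_right _ _) hn
      have hb : 2*Creal/ε ≤ (⌈2*Creal/ε⌉₊ : ℝ) := Nat.le_ceil _
      have hcc : ((⌈2*Creal/ε⌉₊ + 1 : ℕ) : ℝ) ≤ (n:ℝ) := by exact_mod_cast ha
      push_cast at hcc
      linarith
    have h6 : Creal * (1/(n:ℝ)) ≤ ε/2 := by
      have h7 : 2*Creal ≤ (n:ℝ)*ε := by
        have := (div_le_iff₀ hε).mp h5
        linarith
      rw [mul_one_div, div_le_iff₀ hnR0]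
      nlinarith
    calc Creal * (n:ℝ) * (n:ℝ)^(-(α*(T:ℝ)))
        ≤ Creal * (n:ℝ) * (n:ℝ)^(-(2:ℝ)) := by
          apply mul_le_mul_of_nonneg_left h2 (by positivity)
      _ = Creal * ((n:ℝ) * (n:ℝ)^(-(2:ℝ))) := by ring
      _ = Creal * (1/(n:ℝ)) := by rw [h3, h4]
      _ ≤ ε/2 := h6
  -- events
  set μ := delMeasure n α with hμ
  set q : ENNReal := min (ENNReal.ofReal ((n : ℝ) ^ (-α))) 1 with hq
  set v0 : Fin n := ⟨0, by omega⟩ with hv0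
  set Bad1 : Set (Fin n → Bool) := {ω | ω v0 = true} with hBad1
  set Bad2 : Set (Fin n → Bool) :=
    ⋃ m ∈ Finset.range (4*L), ⋃ l ∈ chainsF G m,
      {ω : Fin n → Bool | T ≤ (l.toFinset.filter (fun v => ω v = true)).card} with hBad2
  -- deterministic part
  have hdet : ∀ ω : Fin n → Bool, ω ∉ Bad1 → ω ∉ Bad2 →
      ω ∈ {ω : Fin n → Bool |
        ∃ C₁ : (G.induce (survivors ω)).ConnectedComponent,
          (∀ C' : (G.induce (survivors ω)).ConnectedComponent,
            C'.supp.ncard ≤ C₁.supp.ncard) ∧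
          IsBetaExpander ((G.induce (survivors ω)).induce C₁.supp)
            ((1 / (Δ : ℝ)) * min (1 / (Kconst α f : ℝ)) (α * c / 4))} := by
    intro ω h1 h2
    have hv0f : ω v0 = false := by
      by_contra h
      exact h1 (Bool.not_eq_false (ω v0) |>.mp h)
    have hHa : ∀ l : List (Fin n), l.Chain' G.Adj → l ≠ [] → l.length ≤ 4*L →
        (l.toFinset.filter (fun v => ω v = true)).card < T := by
      intro l hch hlne hlen
      by_contra hge
      push_neg at hge
      apply h2
      have hlp : 1 ≤ l.length := List.length_pos_iff.mpr hlne
      have hm : l.length - 1 < 4*L := by omega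
      have hmem : l ∈ chainsF G (l.length - 1) := mem_chainsF l hch _ (by omega)
      rw [hBad2]
      refine Set.mem_iUnion₂.mpr ⟨l.length - 1, Finset.mem_range.mpr hm, ?_⟩
      exact Set.mem_iUnion₂.mpr ⟨l, hmem, hge⟩
    have hNEC : Nonempty (G.induce (survivors ω)).ConnectedComponent :=
      ⟨(G.induce (survivors ω)).connectedComponentMk ⟨v0, hv0f⟩⟩
    obtain ⟨C₁, hC₁⟩ := Finite.exists_max
      (fun C : (G.induce (survivors ω)).ConnectedComponent => C.supp.ncard)
    refine ⟨C₁, hC₁, ?_⟩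
    have := main_det G hα hα1 hc hΔ hf hK1 hexp hL1 hT1
      (min_le_left A D) (min_le_right A D) hA3 (by rw [← hθdef]; exact hDlt) ω hHa C₁
    exact this
  -- measure bounds
  have hμ1 : μ Bad1 ≤ ENNReal.ofReal ((n:ℝ)^(-α)) := by
    have heq : Bad1 = {ω : Fin n → Bool | ∀ v ∈ ({v0} : Finset (Fin n)), ω v = true} := by
      ext ω
      simp [hBad1]
    rw [heq, hμ, delMeasure_allTrue]
    simp only [Finset.card_singleton, pow_one]
    exact min_le_left _ _
  have hqbound : q^T ≤ ENNReal.ofReal ((n:ℝ)^(-(α*(T:ℝ)))) := by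
    have h1 : q^T ≤ (ENNReal.ofReal ((n:ℝ)^(-α)))^T :=
      pow_le_pow_left' (min_le_left _ _) T
    have h2 : (ENNReal.ofReal ((n:ℝ)^(-α)))^T
        = ENNReal.ofReal (((n:ℝ)^(-α))^T) :=
      (ENNReal.ofReal_pow (Real.rpow_nonneg (by linarith) _) T).symm
    have h3 : ((n:ℝ)^(-α))^T = (n:ℝ)^(-(α*(T:ℝ))) := by
      rw [← Real.rpow_natCast ((n:ℝ)^(-α)) T, ← Real.rpow_mul (by linarith)]
      ring_nf
    rw [h2, h3] at h1
    exact h1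
  have hμ2 : μ Bad2 ≤ ((4*L : ℕ) : ENNReal) * (((n * Δ^(4*L) : ℕ)) : ENNReal)
      * ((2:ENNReal)^(4*L) * q^T) := by
    rw [hBad2, hμ]
    refine (measure_biUnion_finset_le _ _).trans ?_
    have hstep : ∀ m ∈ Finset.range (4*L),
        delMeasure n α (⋃ l ∈ chainsF G m,
          {ω : Fin n → Bool | T ≤ (l.toFinset.filter (fun v => ω v = true)).card})
        ≤ (((n * Δ^(4*L) : ℕ)) : ENNReal) * ((2:ENNReal)^(4*L) * q^T) := by
      intro m hm
      refine (measure_biUnion_finset_le _ _).trans ?_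
      have hterm : ∀ l ∈ chainsF G m,
          delMeasure n α {ω : Fin n → Bool |
            T ≤ (l.toFinset.filter (fun v => ω v = true)).card}
          ≤ (2:ENNReal)^(4*L) * q^T := by
        intro l hl
        refine (delMeasure_manyDeleted α l.toFinset T).trans ?_
        rw [← hq]
        apply mul_le_mul_left
        apply pow_le_pow_right₀ one_le_two
        calc l.toFinset.card ≤ l.length := List.toFinset_card_le l
          _ = m + 1 := len_chainsF m l hl
          _ ≤ 4*L := by
              have := Finset.mem_range.mp hm
              omega
      calc ∑ l ∈ chainsF G m, delMeasure n α {ω : Fin n → Bool |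
              T ≤ (l.toFinset.filter (fun v => ω v = true)).card}
          ≤ ∑ _l ∈ chainsF G m, (2:ENNReal)^(4*L) * q^T :=
            Finset.sum_le_sum hterm
        _ = ((chainsF G m).card : ENNReal) * ((2:ENNReal)^(4*L) * q^T) := by
            rw [Finset.sum_const, nsmul_eq_mul]
        _ ≤ (((n * Δ^(4*L) : ℕ)) : ENNReal) * ((2:ENNReal)^(4*L) * q^T) := by
            apply mul_le_mul_left
            have hcard : (chainsF G m).card ≤ n * Δ^(4*L) := by
              refine (card_chainsF hdeg m).trans ?_
              apply Nat.mul_le_mul_left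
              exact Nat.pow_le_pow_right (by omega) (by
                have := Finset.mem_range.mp hm
                omega)
            exact_mod_cast hcard
    calc ∑ m ∈ Finset.range (4*L), delMeasure n α (⋃ l ∈ chainsF G m,
            {ω : Fin n → Bool | T ≤ (l.toFinset.filter (fun v => ω v = true)).card})
        ≤ ∑ _m ∈ Finset.range (4*L),
            (((n * Δ^(4*L) : ℕ)) : ENNReal) * ((2:ENNReal)^(4*L) * q^T) :=
          Finset.sum_le_sum hstep
      _ = ((4*L : ℕ) : ENNReal) * ((((n * Δ^(4*L) : ℕ)) : ENNReal)
            * ((2:ENNReal)^(4*L) * q^T)) := by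
          rw [Finset.sum_const, Finset.card_range, nsmul_eq_mul]
      _ = ((4*L : ℕ) : ENNReal) * (((n * Δ^(4*L) : ℕ)) : ENNReal)
            * ((2:ENNReal)^(4*L) * q^T) := by ring
  have hμ2' : μ Bad2 ≤ ENNReal.ofReal (Creal * (n:ℝ) * (n:ℝ)^(-(α*(T:ℝ)))) := by
    refine hμ2.trans ?_
    have h2L : (2:ENNReal)^(4*L) = ((2^(4*L) : ℕ) : ENNReal) := by push_cast; ring
    have hrw : ((4*L : ℕ) : ENNReal) * (((n * Δ^(4*L) : ℕ)) : ENNReal)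
        * ((2:ENNReal)^(4*L) * q^T)
        = ((4*L * (n * Δ^(4*L)) * 2^(4*L) : ℕ) : ENNReal) * q^T := by
      rw [h2L]
      push_cast
      ring
    rw [hrw]
    have hCn : ((4*L * (n * Δ^(4*L)) * 2^(4*L) : ℕ) : ENNReal)
        = ENNReal.ofReal (Creal * (n:ℝ)) := by
      rw [← ENNReal.ofReal_natCast]
      congr 1
      rw [hCreal, hCnat]
      push_cast
      ring
    rw [hCn]
    calc ENNReal.ofReal (Creal * (n:ℝ)) * q^T
        ≤ ENNReal.ofReal (Creal * (n:ℝ)) * ENNReal.ofReal ((n:ℝ)^(-(α*(T:ℝ)))) :=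
          mul_le_mul_right hqbound _
      _ = ENNReal.ofReal (Creal * (n:ℝ) * (n:ℝ)^(-(α*(T:ℝ)))) :=
          (ENNReal.ofReal_mul (by positivity)).symm
  -- total
  have hbad : μ (Bad1 ∪ Bad2) ≤ ENNReal.ofReal ε := by
    refine (measure_union_le _ _).trans ?_
    calc μ Bad1 + μ Bad2
        ≤ ENNReal.ofReal ((n:ℝ)^(-α))
          + ENNReal.ofReal (Creal * (n:ℝ) * (n:ℝ)^(-(α*(T:ℝ)))) :=
          add_le_add hμ1 hμ2'
      _ ≤ ENNReal.ofReal (ε/2) + ENNReal.ofReal (ε/2) :=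
          add_le_add (ENNReal.ofReal_le_ofReal hna) (ENNReal.ofReal_le_ofReal hnC)
      _ = ENNReal.ofReal ε := by
          rw [← ENNReal.ofReal_add (by linarith) (by linarith)]
          norm_num
  set E := {ω : Fin n → Bool |
      ∃ C₁ : (G.induce (survivors ω)).ConnectedComponent,
        (∀ C' : (G.induce (survivors ω)).ConnectedComponent,
          C'.supp.ncard ≤ C₁.supp.ncard) ∧
        IsBetaExpander ((G.induce (survivors ω)).induce C₁.supp)
          ((1 / (Δ : ℝ)) * min (1 / (Kconst α f : ℝ)) (α * c / 4))} with hE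
  have hsub : (Set.univ : Set (Fin n → Bool)) ⊆ E ∪ (Bad1 ∪ Bad2) := by
    intro ω _
    by_cases hb1 : ω ∈ Bad1
    · exact Or.inr (Or.inl hb1)
    by_cases hb2 : ω ∈ Bad2
    · exact Or.inr (Or.inr hb2)
    exact Or.inl (hdet ω hb1 hb2)
  have hprob : μ Set.univ = 1 := measure_univ
  have hone : (1:ENNReal) ≤ μ E + ENNReal.ofReal ε := by
    calc (1:ENNReal) = μ Set.univ := hprob.symm
      _ ≤ μ (E ∪ (Bad1 ∪ Bad2)) := measure_mono hsub
      _ ≤ μ E + μ (Bad1 ∪ Bad2) := measure_union_le _ _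
      _ ≤ μ E + ENNReal.ofReal ε := add_le_add_right hbad _
  exact tsub_le_iff_right.mpr hone
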